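/- For all n ≥ 4, the number of permutations in S_n avoiding the consecutive pattern 123 is strictly greater than the number of permutations in S_n avoiding the consecutive pattern 132. -/

import Mathlib

/-- The consecutive pattern `σ ∈ S m` occurs in `π ∈ S n` at (0-indexed) position `i`. -/
def occursAt {m n : ℕ} (σ : Equiv.Perm (Fin m)) (π : Equiv.Perm (Fin n)) (i : ℕ) : Prop :=
  ∃ h : i + m ≤ n, ∀ j k : Fin m,
    σ j < σ k ↔ π ⟨i + j, by have := j.isLt; omega⟩ < π ⟨i + k, by have := k.isLt; omega⟩

/-- `α n σ`: the number of permutations of length `n` avoiding `σ` as a consecutive pattern. -/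
noncomputable def avoiders {m : ℕ} (n : ℕ) (σ : Equiv.Perm (Fin m)) : ℕ :=
  Nat.card {π : Equiv.Perm (Fin n) // ∀ i : ℕ, ¬ occursAt σ π i}

/-- The pattern `123` (the identity). -/
def p123 : Equiv.Perm (Fin 3) := Equiv.refl (Fin 3)

/-- The pattern `132` (0-indexed `0 2 1`). -/
def p132 : Equiv.Perm (Fin 3) := Equiv.swap 1 2


def phi : List ℕ → List ℕ
  | [] => []
  | [a] => [a]
  | [a, b] => [a, b]
  | a :: b :: c :: t => if a < b ∧ b < c then a :: c :: phi (b :: t) else a :: phi (b :: c :: t)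
termination_by l => l.length
decreasing_by all_goals (simp only [List.length_cons]; omega)

def av123 : List ℕ → Prop
  | a :: b :: c :: t => ¬(a < b ∧ b < c) ∧ av123 (b :: c :: t)
  | _ => True
termination_by l => l.length
decreasing_by all_goals (simp only [List.length_cons]; omega)

def av132 : List ℕ → Prop
  | a :: b :: c :: t => ¬(a < c ∧ c < b) ∧ av132 (b :: c :: t)
  | _ => True
termination_by l => l.length
decreasing_by all_goals (simp only [List.length_cons]; omega)

lemma phi_nil : phi [] = [] := by rw [phi]
lemma phi_one (a : ℕ) : phi [a] = [a] := by rw [phi]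
lemma phi_two (a b : ℕ) : phi [a, b] = [a, b] := by rw [phi]

lemma phi_cons3 (a b c : ℕ) (t : List ℕ) :
    phi (a :: b :: c :: t) =
      if a < b ∧ b < c then a :: c :: phi (b :: t) else a :: phi (b :: c :: t) := by
  rw [phi]

lemma phi_short (l : List ℕ) (h : l.length ≤ 2) : phi l = l := by
  match l with
  | [] => exact phi_nil
  | [a] => exact phi_one a
  | [a, b] => exact phi_two a b
  | a :: b :: c :: t => simp at h

lemma av123_cons3 (a b c : ℕ) (t : List ℕ) :
    av123 (a :: b :: c :: t) ↔ ¬(a < b ∧ b < c) ∧ av123 (b :: c :: t) := by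
  rw [av123]

lemma av132_cons3 (a b c : ℕ) (t : List ℕ) :
    av132 (a :: b :: c :: t) ↔ ¬(a < c ∧ c < b) ∧ av132 (b :: c :: t) := by
  rw [av132]

lemma av123_short (l : List ℕ) (h : l.length ≤ 2) : av123 l := by
  match l with
  | [] => rw [av123] <;> simp
  | [a] => rw [av123] <;> simp
  | [a, b] => rw [av123] <;> simp
  | a :: b :: c :: t => simp at h

lemma av132_short (l : List ℕ) (h : l.length ≤ 2) : av132 l := by
  match l with
  | [] => rw [av132] <;> simp
  | [a] => rw [av132] <;> simp
  | [a, b] => rw [av132] <;> simp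
  | a :: b :: c :: t => simp at h

lemma av132_tail (l : List ℕ) (h : av132 l) : av132 l.tail := by
  match l with
  | a :: b :: c :: t => exact ((av132_cons3 a b c t).1 h).2
  | [] => exact av132_short _ (by simp)
  | [a] => exact av132_short _ (by simp)
  | [a, b] => exact av132_short _ (by simp)

lemma phi_length (l : List ℕ) : (phi l).length = l.length := by
  match l with
  | a :: b :: c :: t =>
    rw [phi_cons3]
    split
    · have := phi_length (b :: t); simp_all
    · have := phi_length (b :: c :: t); simp_all
  | [] => rw [phi_nil]
  | [a] => rw [phi_one]
  | [a, b] => rw [phi_two]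
termination_by l.length
decreasing_by all_goals (simp only [List.length_cons]; omega)

lemma phi_perm (l : List ℕ) : (phi l).Perm l := by
  match l with
  | a :: b :: c :: t =>
    rw [phi_cons3]
    split
    · have ih := phi_perm (b :: t)
      exact ((ih.cons c).cons a).trans (List.Perm.cons a (List.Perm.swap b c t))
    · exact (phi_perm (b :: c :: t)).cons a
  | [] => rw [phi_nil]
  | [a] => rw [phi_one]
  | [a, b] => rw [phi_two]
termination_by l.length
decreasing_by all_goals (simp only [List.length_cons]; omega)

lemma phi_head (x : ℕ) (s : List ℕ) : ∃ r, phi (x :: s) = x :: r := by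
  match s with
  | [] => exact ⟨[], phi_one x⟩
  | [a] => exact ⟨[a], phi_two x a⟩
  | a :: b :: t =>
    rw [phi_cons3]
    split
    · exact ⟨b :: phi (a :: t), rfl⟩
    · exact ⟨phi (a :: b :: t), rfl⟩

lemma phi_second (b c : ℕ) (t : List ℕ) (h : ¬ b < c) : ∃ r, phi (b :: c :: t) = b :: c :: r := by
  match t with
  | [] => exact ⟨[], phi_two b c⟩
  | t0 :: t' =>
    rw [phi_cons3, if_neg (by tauto)]
    obtain ⟨r, hr⟩ := phi_head c (t0 :: t')
    exact ⟨r, by rw [hr]⟩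
lemma av123_cons_intro (x : ℕ) (s : List ℕ) (h : av123 s)
    (h2 : ∀ u v t', s = u :: v :: t' → ¬(x < u ∧ u < v)) : av123 (x :: s) := by
  match s with
  | [] => exact av123_short _ (by simp)
  | [u] => exact av123_short _ (by simp)
  | u :: v :: t' => exact (av123_cons3 x u v t').2 ⟨h2 u v t' rfl, h⟩

lemma nodup_tail2 {a b c : ℕ} {t : List ℕ} (h : (a :: b :: c :: t).Nodup) :
    (b :: t).Nodup := by
  simp only [List.nodup_cons, List.mem_cons] at h ⊢
  tauto

lemma phi_av123 (l : List ℕ) (hnd : l.Nodup) (h : av132 l.tail) : av123 (phi l) := by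
  match l with
  | [] => rw [phi_nil]; exact av123_short _ (by simp)
  | [a] => rw [phi_one]; exact av123_short _ (by simp)
  | [a, b] => rw [phi_two]; exact av123_short _ (by simp)
  | a :: b :: c :: t =>
    simp only [List.tail_cons] at h
    have hct : av132 (c :: t) := av132_tail _ h
    have ht : av132 t := by have := av132_tail _ hct; simpa using this
    rw [phi_cons3]
    split
    case isTrue hb =>
      obtain ⟨hab, hbc⟩ := hb
      have ih : av123 (phi (b :: t)) := phi_av123 (b :: t) (nodup_tail2 hnd)
        (by cases t with | nil => exact av132_short _ (by simp) | cons x s => simpa using ht)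
      obtain ⟨r, hr⟩ := phi_head b t
      rw [hr]; rw [hr] at ih
      refine av123_cons_intro _ _ (av123_cons_intro _ _ ih ?_) ?_
      · rintro u v t' huv
        obtain ⟨rfl, -⟩ : b = u ∧ r = v :: t' := by
          constructor <;> [exact (List.cons.injEq _ _ _ _ ▸ huv).1; exact (List.cons.injEq _ _ _ _ ▸ huv).2]
        omega
      · rintro u v t' huv
        obtain ⟨rfl, rfl, -⟩ : c = u ∧ b = v ∧ r = t' := by
          simp only [List.cons.injEq] at huv; tauto
        omega
    case isFalse hb =>
      have ih : av123 (phi (b :: c :: t)) := phi_av123 (b :: c :: t) hnd.of_cons (by simpa using hct)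
      have hab : a ≠ b := by
        simp only [List.nodup_cons, List.mem_cons] at hnd; tauto
      have hbc : b ≠ c := by
        simp only [List.nodup_cons, List.mem_cons] at hnd; tauto
      rcases Nat.lt_or_ge a b with h1 | h1
      · have h2 : ¬ b < c := fun hc => hb ⟨h1, hc⟩
        obtain ⟨r, hr⟩ := phi_second b c t h2
        rw [hr]; rw [hr] at ih
        refine av123_cons_intro _ _ ih ?_
        rintro u v t' huv
        obtain ⟨rfl, rfl, -⟩ : b = u ∧ c = v ∧ r = t' := by
          simp only [List.cons.injEq] at huv; tauto
        omega
      · obtain ⟨r, hr⟩ := phi_head b (c :: t)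
        rw [hr]; rw [hr] at ih
        refine av123_cons_intro _ _ ih ?_
        rintro u v t' huv
        obtain ⟨rfl, -⟩ : b = u ∧ r = v :: t' := by
          simp only [List.cons.injEq] at huv; tauto
        omega
termination_by l.length
decreasing_by all_goals (simp only [List.length_cons]; omega)
lemma exists_cons3 (l : List ℕ) (h : 3 ≤ l.length) : ∃ a b c t, l = a :: b :: c :: t := by
  match l with
  | a :: b :: c :: t => exact ⟨a, b, c, t, rfl⟩
  | [] => simp at h
  | [a] => simp at h
  | [a, b] => simp at h

/-- The auxiliary invariant for injectivity, with ghost parameter `m`. -/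
def Cc (m : ℕ) : List ℕ → Prop
  | a :: b :: c :: _ => (¬(a < c ∧ c < b) ∧ ¬(a < b ∧ b < m)) ∨ (a < c ∧ c < b ∧ c < m ∧ m < b)
  | _ => True

lemma Cc_short (m : ℕ) (l : List ℕ) (h : l.length ≤ 2) : Cc m l := by
  match l with
  | [] => trivial
  | [a] => trivial
  | [a, b] => trivial
  | a :: b :: c :: t => simp at h

lemma Cc_cons3 (m a b c : ℕ) (t : List ℕ) :
    Cc m (a :: b :: c :: t) ↔
      (¬(a < c ∧ c < b) ∧ ¬(a < b ∧ b < m)) ∨ (a < c ∧ c < b ∧ c < m ∧ m < b) := Iff.rfl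

lemma mixed_contra (m a b c a' b' c' : ℕ) (t t' : List ℕ)
    (hC : Cc m (a :: b :: c :: t)) (hC' : Cc m (a' :: b' :: c' :: t'))
    (hs : a < b ∧ b < c) (hs' : ¬(a' < b' ∧ b' < c'))
    (he : phi (a :: b :: c :: t) = phi (a' :: b' :: c' :: t')) : False := by
  rw [phi_cons3 a b c t, if_pos hs, phi_cons3 a' b' c' t', if_neg hs'] at he
  obtain ⟨r, hr⟩ := phi_head b t
  rw [hr] at he
  rw [Cc_cons3] at hC hC'
  match t' with
  | [] =>
    rw [phi_two] at he
    simp only [List.cons.injEq] at he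
    obtain ⟨h1, h2, h3, -⟩ := he
    subst h1; subst h2; subst h3
    omega
  | t0 :: t'' =>
    rw [phi_cons3 b' c' t0 t''] at he
    by_cases hin : b' < c' ∧ c' < t0
    · rw [if_pos hin] at he
      simp only [List.cons.injEq] at he
      obtain ⟨h1, h2, h3, -⟩ := he
      subst h1; subst h2; subst h3
      omega
    · rw [if_neg hin] at he
      obtain ⟨r2, hr2⟩ := phi_head c' (t0 :: t'')
      rw [hr2] at he
      simp only [List.cons.injEq] at he
      obtain ⟨h1, h2, h3, -⟩ := he
      subst h1; subst h2; subst h3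
      omega

lemma Cc_swap_rec (a b c : ℕ) (t : List ℕ) (hnd : (a :: b :: c :: t).Nodup)
    (h : av132 (b :: c :: t)) : Cc c (b :: t) := by
  match t with
  | [] => trivial
  | [t0] => trivial
  | t0 :: t1 :: t'' =>
    have h1 : ¬(b < t0 ∧ t0 < c) := ((av132_cons3 b c t0 (t1 :: t'')).1 h).1
    have h2 : ¬(c < t1 ∧ t1 < t0) :=
      ((av132_cons3 c t0 t1 t'').1 ((av132_cons3 b c t0 (t1 :: t'')).1 h).2).1
    have hne : c ≠ t0 ∧ c ≠ t1 := by
      simp only [List.nodup_cons, List.mem_cons] at hnd; tauto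
    rw [Cc_cons3]
    by_cases h132 : b < t1 ∧ t1 < t0
    · right; omega
    · left; omega

lemma phi_inj_aux : ∀ (N m : ℕ) (l l' : List ℕ), l.length ≤ N →
    l.Nodup → av132 l.tail → Cc m l →
    l'.Nodup → av132 l'.tail → Cc m l' →
    phi l = phi l' → l = l' := by
  intro N
  induction N with
  | zero =>
    intro m l l' hlen _ _ _ _ _ _ he
    have h0 : l = [] := List.length_eq_zero_iff.1 (Nat.le_zero.1 hlen)
    subst h0
    have : l'.length = 0 := by
      have := phi_length l'; have := phi_length ([] : List ℕ)
      rw [← he] at *; simp_all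
    rw [List.length_eq_zero_iff.1 this]
  | succ N ih =>
    intro m l l' hlen hnd htl hC hnd' htl' hC' he
    have hlen_eq : l'.length = l.length := by
      have e1 := phi_length l; have e2 := phi_length l'
      rw [he] at e1; omega
    by_cases hshort : l.length ≤ 2
    · rw [phi_short l hshort, phi_short l' (by omega)] at he
      exact he
    · obtain ⟨a, b, c, t, rfl⟩ := exists_cons3 l (by omega)
      obtain ⟨a', b', c', t', rfl⟩ := exists_cons3 l' (by omega)
      by_cases hs : a < b ∧ b < c <;> by_cases hs' : a' < b' ∧ b' < c'
      · -- both swap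
        rw [phi_cons3 a b c t, if_pos hs, phi_cons3 a' b' c' t', if_pos hs'] at he
        simp only [List.cons.injEq] at he
        obtain ⟨rfl, rfl, hee⟩ := he
        simp only [List.tail_cons] at htl htl'
        have hrec := ih c (b :: t) (b' :: t')
          (by simp only [List.length_cons] at hlen ⊢; omega)
          (nodup_tail2 hnd)
          (by simpa using av132_tail _ (av132_tail _ htl))
          (Cc_swap_rec _ _ _ _ hnd htl)
          (nodup_tail2 hnd')
          (by simpa using av132_tail _ (av132_tail _ htl'))
          (Cc_swap_rec _ _ _ _ hnd' htl')
          hee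
        simp only [List.cons.injEq] at hrec ⊢
        tauto
      · exact absurd (mixed_contra m a b c a' b' c' t t' hC hC' hs hs' he) id
      · exact absurd (mixed_contra m a' b' c' a b c t' t hC' hC hs' hs he.symm) id
      · -- both non-swap
        rw [phi_cons3 a b c t, if_neg hs, phi_cons3 a' b' c' t', if_neg hs'] at he
        simp only [List.cons.injEq] at he
        obtain ⟨rfl, hee⟩ := he
        simp only [List.tail_cons] at htl htl'
        have hCrec : ∀ (b c : ℕ) (t : List ℕ), av132 (b :: c :: t) → Cc 0 (b :: c :: t) := by
          intro b c t h
          match t with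
          | [] => trivial
          | t0 :: t'' =>
            rw [Cc_cons3]
            left
            exact ⟨((av132_cons3 b c t0 t'').1 h).1, by omega⟩
        have hrec := ih 0 (b :: c :: t) (b' :: c' :: t')
          (by simp only [List.length_cons] at hlen ⊢; omega)
          hnd.of_cons
          (by simpa using av132_tail _ htl)
          (hCrec b c t htl)
          hnd'.of_cons
          (by simpa using av132_tail _ htl')
          (hCrec b' c' t' htl')
          hee
        rw [hrec]
/-- Witness list: `[k+3, k+2, ..., 4, 0, 3, 1, 2]`, a permutation of `range (k+4)`. -/
def wtail : ℕ → List ℕ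
  | 0 => [0, 3, 1, 2]
  | k + 1 => (k + 4) :: wtail k

lemma wtail_perm_range : ∀ k, (wtail k).Perm (List.range (k + 4)) := by
  intro k
  induction k with
  | zero => decide
  | succ k ih =>
    show ((k + 4) :: wtail k).Perm (List.range (k + 5))
    rw [List.range_succ]
    exact (ih.cons _).trans (List.perm_append_singleton _ _).symm

lemma wtail_length (k : ℕ) : (wtail k).length = k + 4 := by
  have := (wtail_perm_range k).length_eq; simpa using this

lemma wtail_mem_lt (k x : ℕ) (h : x ∈ wtail k) : x < k + 4 := by
  have := (wtail_perm_range k).mem_iff.1 h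
  simpa using this

lemma wtail_nodup (k : ℕ) : (wtail k).Nodup :=
  ((wtail_perm_range k).nodup_iff).2 List.nodup_range

lemma wtail_av123 : ∀ k, av123 (wtail k) := by
  intro k
  induction k with
  | zero =>
    show av123 [0, 3, 1, 2]
    rw [av123_cons3]
    refine ⟨by omega, ?_⟩
    rw [av123_cons3]
    exact ⟨by omega, av123_short _ (by simp)⟩
  | succ k ih =>
    show av123 ((k + 4) :: wtail k)
    refine av123_cons_intro _ _ ih ?_
    rintro u v t' huv
    have hu : u < k + 4 := wtail_mem_lt k u (by rw [huv]; simp)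
    omega

lemma wtail_not_phi : ∀ (k : ℕ) (l : List ℕ), l.Nodup → av132 l → phi l ≠ wtail k := by
  intro k
  induction k with
  | zero =>
    intro l hnd h he
    have hlen : l.length = 4 := by
      have := phi_length l; rw [he] at this; simpa [wtail_length] using this.symm
    obtain ⟨a, b, c, t, rfl⟩ := exists_cons3 l (by omega)
    have ht : ∃ d, t = [d] := by
      match t with
      | [d] => exact ⟨d, rfl⟩
      | [] => simp at hlen
      | x :: y :: s => simp at hlen
    obtain ⟨d, rfl⟩ := ht
    have hcl1 : ¬(a < c ∧ c < b) := ((av132_cons3 a b c [d]).1 h).1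
    have hcl2 : ¬(b < d ∧ d < c) :=
      ((av132_cons3 b c d []).1 ((av132_cons3 a b c [d]).1 h).2).1
    rw [phi_cons3] at he
    by_cases hs : a < b ∧ b < c
    · rw [if_pos hs, phi_two] at he
      simp only [wtail, List.cons.injEq] at he
      omega
    · rw [if_neg hs, phi_cons3 b c d []] at he
      by_cases hs2 : b < c ∧ c < d
      · rw [if_pos hs2, phi_one] at he
        simp only [wtail, List.cons.injEq] at he
        omega
      · rw [if_neg hs2, phi_two] at he
        simp only [wtail, List.cons.injEq] at he
        omega
  | succ k ih =>
    intro l hnd h he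
    have hlen : l.length = k + 5 := by
      have := phi_length l; rw [he] at this
      rw [show wtail (k+1) = (k+4) :: wtail k from rfl] at this
      simp only [List.length_cons, wtail_length] at this; omega
    obtain ⟨a, b, c, t, rfl⟩ := exists_cons3 l (by omega)
    rw [phi_cons3] at he
    rw [show wtail (k+1) = (k+4) :: wtail k from rfl] at he
    by_cases hs : a < b ∧ b < c
    · rw [if_pos hs] at he
      obtain ⟨r, hr⟩ := phi_head b t
      rw [hr] at he
      simp only [List.cons.injEq] at he
      obtain ⟨ha, hw⟩ := he
      have hc : c ∈ wtail k := by rw [← hw]; simp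
      have := wtail_mem_lt k c hc
      omega
    · rw [if_neg hs] at he
      simp only [List.cons.injEq] at he
      exact ih (b :: c :: t) hnd.of_cons (by simpa using av132_tail _ h) he.2
def listOf {n : ℕ} (π : Equiv.Perm (Fin n)) : List ℕ := List.ofFn fun i => (π i : ℕ)

lemma listOf_length {n : ℕ} (π : Equiv.Perm (Fin n)) : (listOf π).length = n := by
  simp [listOf]

lemma listOf_nodup {n : ℕ} (π : Equiv.Perm (Fin n)) : (listOf π).Nodup :=
  List.nodup_ofFn.2 (Fin.val_injective.comp π.injective)

lemma listOf_mem_lt {n : ℕ} (π : Equiv.Perm (Fin n)) (x : ℕ) (h : x ∈ listOf π) : x < n := by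
  simp only [listOf, List.mem_ofFn, Set.mem_range] at h
  obtain ⟨i, rfl⟩ := h
  exact (π i).2

lemma listOf_injective {n : ℕ} : Function.Injective (listOf (n := n)) := by
  intro π π' h
  ext i
  have : ∀ j : Fin n, (listOf π)[j.1]'(by rw [listOf_length]; exact j.2) = (π j : ℕ) := by
    intro j; simp [listOf, List.getElem_ofFn]
  have h2 : ∀ j : Fin n, (listOf π')[j.1]'(by rw [listOf_length]; exact j.2) = (π' j : ℕ) := by
    intro j; simp [listOf, List.getElem_ofFn]
  rw [← this i, ← h2 i]
  congr 1

lemma occurs123_iff {n : ℕ} (π : Equiv.Perm (Fin n)) (i : ℕ) :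
    occursAt p123 π i ↔
      ∃ _ : i + 3 ≤ n, π ⟨i, by omega⟩ < π ⟨i + 1, by omega⟩ ∧
        π ⟨i + 1, by omega⟩ < π ⟨i + 2, by omega⟩ := by
  constructor
  · rintro ⟨h, hp⟩
    exact ⟨h, (hp 0 1).1 (by decide), (hp 1 2).1 (by decide)⟩
  · rintro ⟨h, h1, h2⟩
    refine ⟨h, ?_⟩
    intro j k
    fin_cases j <;> fin_cases k
    · exact iff_of_false (by decide) (lt_irrefl _)
    · exact iff_of_true (by decide) h1
    · exact iff_of_true (by decide) (h1.trans h2)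
    · exact iff_of_false (by decide) (asymm h1)
    · exact iff_of_false (by decide) (lt_irrefl _)
    · exact iff_of_true (by decide) h2
    · exact iff_of_false (by decide) (asymm (h1.trans h2))
    · exact iff_of_false (by decide) (asymm h2)
    · exact iff_of_false (by decide) (lt_irrefl _)

lemma occurs132_iff {n : ℕ} (π : Equiv.Perm (Fin n)) (i : ℕ) :
    occursAt p132 π i ↔
      ∃ _ : i + 3 ≤ n, π ⟨i, by omega⟩ < π ⟨i + 2, by omega⟩ ∧
        π ⟨i + 2, by omega⟩ < π ⟨i + 1, by omega⟩ := by
  constructor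
  · rintro ⟨h, hp⟩
    exact ⟨h, (hp 0 2).1 (by decide), (hp 2 1).1 (by decide)⟩
  · rintro ⟨h, h1, h2⟩
    refine ⟨h, ?_⟩
    intro j k
    fin_cases j <;> fin_cases k
    · exact iff_of_false (by decide) (lt_irrefl _)
    · exact iff_of_true (by decide) (h1.trans h2)
    · exact iff_of_true (by decide) h1
    · exact iff_of_false (by decide) (asymm (h1.trans h2))
    · exact iff_of_false (by decide) (lt_irrefl _)
    · exact iff_of_false (by decide) (asymm h2)
    · exact iff_of_false (by decide) (asymm h1)
    · exact iff_of_true (by decide) h2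
    · exact iff_of_false (by decide) (lt_irrefl _)

lemma av123_iff_forall (l : List ℕ) : av123 l ↔ ∀ i, (h : i + 3 ≤ l.length) →
    ¬ (l[i]'(by omega) < l[i+1]'(by omega) ∧ l[i+1]'(by omega) < l[i+2]'(by omega)) := by
  match l with
  | [] => simp [av123_short]
  | [a] => simp [av123_short]
  | [a, b] =>
    refine iff_of_true (av123_short _ (by simp)) ?_
    intro i h; simp at h
  | a :: b :: c :: t =>
    rw [av123_cons3, av123_iff_forall (b :: c :: t)]
    constructor
    · rintro ⟨hhead, hrest⟩ i h
      match i with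
      | 0 => simpa using hhead
      | i + 1 =>
        have := hrest i (by simp at h ⊢; omega)
        simpa using this
    · intro H
      refine ⟨by simpa using H 0 (by simp), ?_⟩
      intro i h
      have := H (i + 1) (by simp at h ⊢; omega)
      simpa using this
termination_by l.length
decreasing_by all_goals (simp only [List.length_cons]; omega)

lemma av132_iff_forall (l : List ℕ) : av132 l ↔ ∀ i, (h : i + 3 ≤ l.length) →
    ¬ (l[i]'(by omega) < l[i+2]'(by omega) ∧ l[i+2]'(by omega) < l[i+1]'(by omega)) := by
  match l with
  | [] => simp [av132_short]
  | [a] => simp [av132_short]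
  | [a, b] =>
    refine iff_of_true (av132_short _ (by simp)) ?_
    intro i h; simp at h
  | a :: b :: c :: t =>
    rw [av132_cons3, av132_iff_forall (b :: c :: t)]
    constructor
    · rintro ⟨hhead, hrest⟩ i h
      match i with
      | 0 => simpa using hhead
      | i + 1 =>
        have := hrest i (by simp at h ⊢; omega)
        simpa using this
    · intro H
      refine ⟨by simpa using H 0 (by simp), ?_⟩
      intro i h
      have := H (i + 1) (by simp at h ⊢; omega)
      simpa using this
termination_by l.length
decreasing_by all_goals (simp only [List.length_cons]; omega)

lemma perm_av123 {n : ℕ} (π : Equiv.Perm (Fin n)) :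
    (∀ i, ¬ occursAt p123 π i) ↔ av123 (listOf π) := by
  rw [av123_iff_forall]
  constructor
  · intro H i h
    rw [listOf_length] at h
    have h' := H i
    rw [occurs123_iff] at h'
    simp only [not_exists] at h'
    have h'' := h' h
    rintro ⟨hc1, hc2⟩
    simp only [listOf, List.getElem_ofFn] at hc1 hc2
    exact h'' ⟨hc1, hc2⟩
  · intro H i
    rw [occurs123_iff]
    rintro ⟨h, hc1, hc2⟩
    refine H i (by rw [listOf_length]; exact h) ?_
    simp only [listOf, List.getElem_ofFn]
    exact ⟨hc1, hc2⟩

lemma perm_av132 {n : ℕ} (π : Equiv.Perm (Fin n)) :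
    (∀ i, ¬ occursAt p132 π i) ↔ av132 (listOf π) := by
  rw [av132_iff_forall]
  constructor
  · intro H i h
    rw [listOf_length] at h
    have h' := H i
    rw [occurs132_iff] at h'
    simp only [not_exists] at h'
    have h'' := h' h
    rintro ⟨hc1, hc2⟩
    simp only [listOf, List.getElem_ofFn] at hc1 hc2
    exact h'' ⟨hc1, hc2⟩
  · intro H i
    rw [occurs132_iff]
    rintro ⟨h, hc1, hc2⟩
    refine H i (by rw [listOf_length]; exact h) ?_
    simp only [listOf, List.getElem_ofFn]
    exact ⟨hc1, hc2⟩

noncomputable def toPerm (n : ℕ) (l : List ℕ) (hlen : l.length = n) (hnd : l.Nodup)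
    (hbd : ∀ x ∈ l, x < n) : Equiv.Perm (Fin n) :=
  Equiv.ofBijective
    (fun i => (⟨l[i.1]'(by omega), hbd _ (List.getElem_mem _)⟩ : Fin n))
    (Finite.injective_iff_bijective.1 (by
      intro i j hij
      simp only [Fin.mk.injEq] at hij
      exact Fin.ext ((hnd.getElem_inj_iff).1 hij)))

lemma listOf_toPerm (n : ℕ) (l : List ℕ) (hlen : l.length = n) (hnd : l.Nodup)
    (hbd : ∀ x ∈ l, x < n) : listOf (toPerm n l hlen hnd hbd) = l := by
  apply List.ext_getElem (by simp [listOf_length, hlen])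
  intro i h1 h2
  simp only [listOf, List.getElem_ofFn, toPerm, Equiv.ofBijective_apply]
lemma Cc0_of_av132 (l : List ℕ) (h : av132 l) : Cc 0 l := by
  match l with
  | [] => trivial
  | [a] => trivial
  | [a, b] => trivial
  | a :: b :: c :: t =>
    rw [Cc_cons3]; left
    exact ⟨((av132_cons3 a b c t).1 h).1, by omega⟩

/-- For all `n ≥ 4`, `α_n(123) > α_n(132)`. -/
theorem avoiders_123_gt_132 : ∀ n : ℕ, 4 ≤ n → avoiders n p132 < avoiders n p123 := by
  intro n hn
  unfold avoiders
  haveI F1 : Fintype {π : Equiv.Perm (Fin n) // ∀ i : ℕ, ¬ occursAt p132 π i} :=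
    Fintype.ofFinite _
  haveI F2 : Fintype {π : Equiv.Perm (Fin n) // ∀ i : ℕ, ¬ occursAt p123 π i} :=
    Fintype.ofFinite _
  rw [Nat.card_eq_fintype_card, Nat.card_eq_fintype_card]
  have hlenphi : ∀ π : Equiv.Perm (Fin n), (phi (listOf π)).length = n := by
    intro π; rw [phi_length, listOf_length]
  have hndphi : ∀ π : Equiv.Perm (Fin n), (phi (listOf π)).Nodup := by
    intro π; exact ((phi_perm _).nodup_iff).2 (listOf_nodup _)
  have hbdphi : ∀ (π : Equiv.Perm (Fin n)) (y : ℕ), y ∈ phi (listOf π) → y < n := by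
    intro π y hy; exact listOf_mem_lt _ y ((phi_perm _).subset hy)
  let f : {π : Equiv.Perm (Fin n) // ∀ i : ℕ, ¬ occursAt p132 π i} →
      {π : Equiv.Perm (Fin n) // ∀ i : ℕ, ¬ occursAt p123 π i} := fun x =>
    ⟨toPerm n (phi (listOf x.1)) (hlenphi x.1) (hndphi x.1) (hbdphi x.1),
     (perm_av123 _).2 (by
        rw [listOf_toPerm]
        exact phi_av123 _ (listOf_nodup _) (av132_tail _ ((perm_av132 _).1 x.2)))⟩
  have hinj : Function.Injective f := by
    intro x y hxy
    have hval : toPerm n (phi (listOf x.1)) (hlenphi x.1) (hndphi x.1) (hbdphi x.1) =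
        toPerm n (phi (listOf y.1)) (hlenphi y.1) (hndphi y.1) (hbdphi y.1) :=
      congrArg Subtype.val hxy
    have hphi : phi (listOf x.1) = phi (listOf y.1) := by
      have := congrArg listOf hval
      rwa [listOf_toPerm, listOf_toPerm] at this
    have h132x : av132 (listOf x.1) := (perm_av132 _).1 x.2
    have h132y : av132 (listOf y.1) := (perm_av132 _).1 y.2
    have heq : listOf x.1 = listOf y.1 :=
      phi_inj_aux n 0 (listOf x.1) (listOf y.1) (by rw [listOf_length])
        (listOf_nodup _) (av132_tail _ h132x) (Cc0_of_av132 _ h132x)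
        (listOf_nodup _) (av132_tail _ h132y) (Cc0_of_av132 _ h132y) hphi
    exact Subtype.ext (listOf_injective heq)
  have wlen : (wtail (n - 4)).length = n := by rw [wtail_length]; omega
  have wbd : ∀ x ∈ wtail (n - 4), x < n := by
    intro x hx; have := wtail_mem_lt _ x hx; omega
  let b : {π : Equiv.Perm (Fin n) // ∀ i : ℕ, ¬ occursAt p123 π i} :=
    ⟨toPerm n (wtail (n - 4)) wlen (wtail_nodup _) wbd,
     (perm_av123 _).2 (by rw [listOf_toPerm]; exact wtail_av123 _)⟩
  have hnotmem : b ∉ Set.range f := by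
    rintro ⟨x, hx⟩
    have hval : toPerm n (phi (listOf x.1)) (hlenphi x.1) (hndphi x.1) (hbdphi x.1) =
        toPerm n (wtail (n - 4)) wlen (wtail_nodup _) wbd :=
      congrArg Subtype.val hx
    have hphi : phi (listOf x.1) = wtail (n - 4) := by
      have := congrArg listOf hval
      rwa [listOf_toPerm, listOf_toPerm] at this
    exact wtail_not_phi (n - 4) (listOf x.1) (listOf_nodup _) ((perm_av132 _).1 x.2) hphi
  exact Fintype.card_lt_of_injective_of_notMem f hinj hnotmem
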